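/- Fix Φ ∈ (0, π). For the hyperbolic inner angle at equal radii, θ(t, t) → 0 as t → +∞, where θ(x, y) = arccos((cosh l(x,y) · cosh x − cosh y)/(sinh l(x,y) · sinh x)) and l(x, y) = arcosh(cosh x cosh y + sinh x sinh y cos Φ). -/

import Mathlib

/-- The inverse of `cosh` on `[1, ∞)`. -/
noncomputable def arcosh (x : ℝ) : ℝ := Real.log (x + Real.sqrt (x ^ 2 - 1))

/-- The hyperbolic edge length of the two-circle configuration with radii `x, y` and
exterior intersection angle `Φ`. -/
noncomputable def hypLen (Φ x y : ℝ) : ℝ :=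
  arcosh (Real.cosh x * Real.cosh y + Real.sinh x * Real.sinh y * Real.cos Φ)

/-- The hyperbolic inner angle at the vertex of radius `x` in the two-circle configuration
with radii `x, y` and exterior intersection angle `Φ`. -/
noncomputable def thetaH (Φ x y : ℝ) : ℝ :=
  Real.arccos ((Real.cosh (hypLen Φ x y) * Real.cosh x - Real.cosh y) /
    (Real.sinh (hypLen Φ x y) * Real.sinh x))

lemma arcosh_inv_aux {x : ℝ} (hx : 1 ≤ x) :
    (x + Real.sqrt (x ^ 2 - 1))⁻¹ = x - Real.sqrt (x ^ 2 - 1) := by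
  have h0 : (0:ℝ) ≤ x ^ 2 - 1 := by nlinarith
  have hs : Real.sqrt (x ^ 2 - 1) ^ 2 = x ^ 2 - 1 := Real.sq_sqrt h0
  exact inv_eq_of_mul_eq_one_right (by nlinarith)

lemma arcosh_pos_aux {x : ℝ} (hx : 1 ≤ x) : 0 < x + Real.sqrt (x ^ 2 - 1) := by
  have := Real.sqrt_nonneg (x ^ 2 - 1); linarith

lemma cosh_arcosh {x : ℝ} (hx : 1 ≤ x) : Real.cosh (arcosh x) = x := by
  rw [arcosh, Real.cosh_log (arcosh_pos_aux hx), arcosh_inv_aux hx]; ring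

lemma sinh_arcosh {x : ℝ} (hx : 1 ≤ x) :
    Real.sinh (arcosh x) = Real.sqrt (x ^ 2 - 1) := by
  rw [arcosh, Real.sinh_log (arcosh_pos_aux hx), arcosh_inv_aux hx]; ring

/-- The pure algebraic identity behind the angle formula. -/
lemma angle_arg_eq (a s u C : ℝ) (hs : 0 < s) (hu0 : 0 < u) (ha : 0 < a)
    (hu2 : u ^ 2 = 1 + s ^ 2) (hC : C = 1 + s ^ 2 * a) :
    (C * u - u) / (Real.sqrt (C ^ 2 - 1) * s)
      = Real.sqrt ((1 + s ^ 2) * a / (2 + s ^ 2 * a)) := by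
  have hD0 : (0:ℝ) < 2 + s ^ 2 * a := by positivity
  set r := Real.sqrt (a * (2 + s ^ 2 * a)) with hr
  have hr0 : 0 < r := Real.sqrt_pos.2 (by positivity)
  have hr2 : r ^ 2 = a * (2 + s ^ 2 * a) := Real.sq_sqrt (by positivity)
  have h1 : Real.sqrt (C ^ 2 - 1) = s * r := by
    rw [hC, show (1 + s ^ 2 * a) ^ 2 - 1 = s ^ 2 * (a * (2 + s ^ 2 * a)) by ring,
      Real.sqrt_mul (sq_nonneg s), Real.sqrt_sq hs.le]
  have h2 : Real.sqrt ((1 + s ^ 2) * a / (2 + s ^ 2 * a)) = u * a / r := by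
    have h : (1 + s ^ 2) * a / (2 + s ^ 2 * a) = (u * a / r) ^ 2 := by
      rw [div_pow, hr2, show (u * a) ^ 2 = u ^ 2 * a ^ 2 by ring, hu2]; field_simp
    rw [h, Real.sqrt_sq (by positivity)]
  rw [h1, h2, hC]
  field_simp
  ring

/-- For a fixed weight `Φ ∈ (0, π)`, the hyperbolic inner angle at equal radii tends to
`0` as `t → +∞`. -/
theorem hyperbolic_angle_diag_tendsto_atTop (Φ : ℝ) (hΦ : Φ ∈ Set.Ioo 0 Real.pi) :
    Filter.Tendsto (fun t => thetaH Φ t t) Filter.atTop (nhds 0) := by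
  obtain ⟨hΦ0, hΦπ⟩ := hΦ
  have hca : -1 < Real.cos Φ := by
    have h := Real.cos_lt_cos_of_nonneg_of_le_pi hΦ0.le le_rfl hΦπ
    rwa [Real.cos_pi] at h
  have ha : 0 < 1 + Real.cos Φ := by linarith
  -- the key function
  have heq : ∀ᶠ t in Filter.atTop, thetaH Φ t t =
      Real.arccos (Real.sqrt ((1 + Real.sinh t ^ 2) * (1 + Real.cos Φ) /
        (2 + Real.sinh t ^ 2 * (1 + Real.cos Φ)))) := by
    filter_upwards [Filter.eventually_gt_atTop 0] with t ht
    have hs : 0 < Real.sinh t := by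
      have := Real.sinh_lt_sinh.2 ht
      simpa using this
    have hu0 : 0 < Real.cosh t := Real.cosh_pos t
    have hu2 : Real.cosh t ^ 2 = 1 + Real.sinh t ^ 2 := by
      have := Real.cosh_sq t; linarith
    have hCeq : Real.cosh t * Real.cosh t + Real.sinh t * Real.sinh t * Real.cos Φ
        = 1 + Real.sinh t ^ 2 * (1 + Real.cos Φ) := by nlinarith [hu2]
    have hC1 : 1 ≤ Real.cosh t * Real.cosh t + Real.sinh t * Real.sinh t * Real.cos Φ := by
      rw [hCeq]; nlinarith
    rw [thetaH, hypLen, cosh_arcosh hC1, sinh_arcosh hC1]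
    congr 1
    exact angle_arg_eq (1 + Real.cos Φ) (Real.sinh t) (Real.cosh t) _ hs hu0 ha hu2 hCeq
  -- the inner fraction tends to 1
  have hg1 : Filter.Tendsto (fun t => (1 + Real.sinh t ^ 2) * (1 + Real.cos Φ) /
      (2 + Real.sinh t ^ 2 * (1 + Real.cos Φ))) Filter.atTop (nhds 1) := by
    have hsinh : Filter.Tendsto Real.sinh Filter.atTop Filter.atTop := by
      refine Filter.tendsto_atTop_mono' _ ?_ Filter.tendsto_id
      filter_upwards [Filter.eventually_ge_atTop 0] with t ht
      exact Real.self_le_sinh_iff.2 ht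
    have hsq : Filter.Tendsto (fun t => Real.sinh t ^ 2) Filter.atTop Filter.atTop :=
      (Filter.tendsto_pow_atTop two_ne_zero).comp hsinh
    have hF : Filter.Tendsto (fun v : ℝ => ((1 + v) * (1 + Real.cos Φ)) /
        (2 + v * (1 + Real.cos Φ))) Filter.atTop (nhds 1) := by
      have hnum : Filter.Tendsto (fun v : ℝ => v⁻¹ * (1 + Real.cos Φ) + (1 + Real.cos Φ))
          Filter.atTop (nhds (1 + Real.cos Φ)) := by
        have h2 := ((tendsto_inv_atTop_zero (𝕜 := ℝ)).mul_const (1 + Real.cos Φ)).add_const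
          (1 + Real.cos Φ)
        simpa using h2
      have hden : Filter.Tendsto (fun v : ℝ => v⁻¹ * 2 + (1 + Real.cos Φ))
          Filter.atTop (nhds (1 + Real.cos Φ)) := by
        have h2 := ((tendsto_inv_atTop_zero (𝕜 := ℝ)).mul_const (2:ℝ)).add_const
          (1 + Real.cos Φ)
        simpa using h2
      have hdiv := hnum.div hden ha.ne'
      rw [div_self ha.ne'] at hdiv
      refine hdiv.congr' ?_
      filter_upwards [Filter.eventually_gt_atTop 0] with v hv
      simp only [Pi.div_apply]
      field_simp
    exact hF.comp hsq
  have hsqrt : Filter.Tendsto (fun t => Real.sqrt ((1 + Real.sinh t ^ 2) * (1 + Real.cos Φ) /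
      (2 + Real.sinh t ^ 2 * (1 + Real.cos Φ)))) Filter.atTop (nhds 1) := by
    have := (Real.continuous_sqrt.tendsto 1).comp hg1
    simpa [Function.comp_def] using this
  have harccos := (Real.continuous_arccos.tendsto 1).comp hsqrt
  rw [Real.arccos_one] at harccos
  exact harccos.congr' (Filter.EventuallyEq.symm heq)
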